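/- Let 2 ≤ k ≤ n and write n − 1 = (k−1)q + r with 0 ≤ r < k−1. Then there exists a connected k*-dense graph on n vertices with exactly q·C(k,2) + C(r,2) + r(k−r) edges. -/

import Mathlib

def Rel' (m q c : ℕ) (a b : ℕ) : Prop :=
  (a = 0 ∧ 0 < b ∧ b ≤ q * m) ∨ (b = 0 ∧ 0 < a ∧ a ≤ q * m) ∨
  (∃ i, i * m < a ∧ a ≤ i * m + m ∧ i * m < b ∧ b ≤ i * m + m) ∨
  (q * m < a ∧ q * m < b) ∨
  (q * m < a ∧ 0 < b ∧ b ≤ c) ∨ (q * m < b ∧ 0 < a ∧ a ≤ c)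

lemma Rel'_symm {m q c a b : ℕ} (h : Rel' m q c a b) : Rel' m q c b a := by
  unfold Rel' at *
  rcases h with h|h|⟨i,h1,h2,h3,h4⟩|h|h|h
  · exact Or.inr (Or.inl h)
  · exact Or.inl h
  · exact Or.inr (Or.inr (Or.inl ⟨i, h3, h4, h1, h2⟩))
  · exact Or.inr (Or.inr (Or.inr (Or.inl ⟨h.2, h.1⟩)))
  · exact Or.inr (Or.inr (Or.inr (Or.inr (Or.inr h))))
  · exact Or.inr (Or.inr (Or.inr (Or.inr (Or.inl h))))

def myG (n m q c : ℕ) : SimpleGraph (Fin n) where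
  Adj u v := u ≠ v ∧ Rel' m q c u.val v.val
  symm := ⟨by rintro u v ⟨h1, h2⟩; exact ⟨h1.symm, Rel'_symm h2⟩⟩
  loopless := ⟨fun u h => h.1 rfl⟩

lemma myG_adj {n m q c : ℕ} (u v : Fin n) :
    (myG n m q c).Adj u v ↔ u ≠ v ∧ Rel' m q c u.val v.val := Iff.rfl

lemma block_uniq {m a i j : ℕ} (h1 : i * m < a) (h2 : a ≤ i * m + m)
    (h3 : j * m < a) (h4 : a ≤ j * m + m) : i = j := by
  have hij : i < j + 1 := by
    have h5 : i * m < (j + 1) * m := by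
      calc i * m < a := h1
      _ ≤ j * m + m := h4
      _ = (j+1) * m := by ring
    exact Nat.lt_of_mul_lt_mul_right h5
  have hji : j < i + 1 := by
    have h5 : j * m < (i + 1) * m := by
      calc j * m < a := h3
      _ ≤ i * m + m := h2
      _ = (i+1) * m := by ring
    exact Nat.lt_of_mul_lt_mul_right h5
  omega

lemma exists_block {m q a : ℕ} (hm : 0 < m) (h0 : 0 < a) (ha : a ≤ q * m) :
    ∃ i, i * m < a ∧ a ≤ i * m + m ∧ i * m + m ≤ q * m := by
  induction q with
  | zero => omega
  | succ p ih =>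
    have hs : (p+1) * m = p * m + m := by ring
    by_cases h : a ≤ p * m
    · obtain ⟨i, hi1, hi2, hi3⟩ := ih h
      exact ⟨i, hi1, hi2, by omega⟩
    · exact ⟨p, by omega, by omega, by omega⟩

lemma block_le {m i q a : ℕ} (h1 : i * m < a) (ha : a ≤ q * m) : i * m + m ≤ q * m := by
  have hi : i < q := Nat.lt_of_mul_lt_mul_right (by omega : i * m < q * m)
  calc i * m + m = (i+1) * m := by ring
  _ ≤ q * m := Nat.mul_le_mul_right m hi

lemma ncard_val_mem {n : ℕ} (S : Finset ℕ) (h : ∀ a ∈ S, a < n) :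
    Set.ncard {x : Fin n | x.val ∈ S} = S.card := by
  rw [← Finset.card_attachFin S h, ← Set.ncard_coe_finset]
  congr 1
  ext x
  simp [Finset.mem_attachFin]

lemma dense_lower {n m q c r : ℕ} (hn : n = q*m+r+1) (hm : 0 < m) (hq : 0 < q)
    (hrm : r < m) (hc : c + r = m + 1)
    {u v : Fin n} (huv : (myG n m q c).Adj u v) :
    m - 1 ≤ ((myG n m q c).neighborSet u ∩ (myG n m q c).neighborSet v).ncard := by
  have hmq : m ≤ q * m := Nat.le_mul_of_pos_left m hq
  suffices H : ∀ u v : Fin n, (myG n m q c).Adj u v → u.val ≤ v.val →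
      m - 1 ≤ ((myG n m q c).neighborSet u ∩ (myG n m q c).neighborSet v).ncard by
    rcases le_total u.val v.val with h|h
    · exact H u v huv h
    · rw [Set.inter_comm]; exact H v u huv.symm h
  clear huv u v
  intro u v huv hle
  obtain ⟨hne, hrel⟩ := (myG_adj u v).mp huv
  have hneval : u.val ≠ v.val := fun h => hne (Fin.ext h)
  have hult : u.val < n := u.isLt
  have hvlt : v.val < n := v.isLt
  -- case split on classes
  rcases Nat.lt_or_ge (q*m) u.val with hu | hu
  · -- u extra, hence v extra
    have hv : q * m < v.val := by omega
    have hr2 : 2 ≤ r := by omega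
    set S : Finset ℕ := Finset.Ioc 0 c ∪ (((Finset.Ioc (q*m) (q*m+r)).erase u.val).erase v.val) with hS
    have hmemS : ∀ a, a ∈ S ↔ ((0 < a ∧ a ≤ c) ∨ (q*m < a ∧ a ≤ q*m + r ∧ a ≠ u.val ∧ a ≠ v.val)) := by
      intro a
      simp only [hS, Finset.mem_union, Finset.mem_Ioc, Finset.mem_erase]
      tauto
    have hsub : {x : Fin n | x.val ∈ S} ⊆
        ((myG n m q c).neighborSet u ∩ (myG n m q c).neighborSet v) := by
      intro x hx
      rw [Set.mem_setOf_eq, hmemS] at hx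
      rcases hx with ⟨h1, h2⟩ | ⟨h1, h2, h3, h4⟩
      · have hxc : x.val ≤ c := h2
        refine ⟨⟨Fin.ne_of_val_ne (by omega), ?_⟩, ⟨Fin.ne_of_val_ne (by omega), ?_⟩⟩
        · exact Or.inr (Or.inr (Or.inr (Or.inr (Or.inl ⟨hu, h1, h2⟩))))
        · exact Or.inr (Or.inr (Or.inr (Or.inr (Or.inl ⟨hv, h1, h2⟩))))
      · refine ⟨⟨Fin.ne_of_val_ne (fun h => h3 h.symm), ?_⟩,
          ⟨Fin.ne_of_val_ne (fun h => h4 h.symm), ?_⟩⟩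
        · exact Or.inr (Or.inr (Or.inr (Or.inl ⟨hu, h1⟩)))
        · exact Or.inr (Or.inr (Or.inr (Or.inl ⟨hv, h1⟩)))
    have hSlt : ∀ a ∈ S, a < n := by
      intro a ha
      rw [hmemS] at ha
      omega
    have hcard : S.card = (c) + (r - 2) := by
      rw [hS, Finset.card_union_of_disjoint, Finset.card_erase_of_mem, Finset.card_erase_of_mem]
      · simp only [Nat.card_Ioc]; omega
      · simp only [Finset.mem_Ioc]; omega
      · simp only [Finset.mem_erase, Finset.mem_Ioc]
        exact ⟨by omega, by omega, by omega⟩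
      · rw [Finset.disjoint_left]
        intro a ha hb
        simp only [Finset.mem_Ioc] at ha
        simp only [Finset.mem_erase, Finset.mem_Ioc] at hb
        omega
    have hle2 := Set.ncard_le_ncard hsub (Set.toFinite _)
    rw [ncard_val_mem S hSlt, hcard] at hle2
    omega
  · rcases Nat.lt_or_ge (q*m) v.val with hv | hv
    · -- u interior chosen, v extra
      have hu0 : 0 < u.val := by
        rcases hrel with ⟨h1,h2,h3⟩|⟨h1,h2,h3⟩|⟨i,h1,h2,h3,h4⟩|⟨h1,h2⟩|⟨h1,h2,h3⟩|⟨h1,h2,h3⟩ <;>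
          first
          | omega
          | (exfalso; have := block_le h1 hu; omega)
      have huc : u.val ≤ c := by
        rcases hrel with ⟨h1,h2,h3⟩|⟨h1,h2,h3⟩|⟨i,h1,h2,h3,h4⟩|⟨h1,h2⟩|⟨h1,h2,h3⟩|⟨h1,h2,h3⟩ <;>
          first
          | omega
          | (exfalso; have := block_le h1 hu; omega)
      have hr1 : 1 ≤ r := by omega
      have hcm : c ≤ m := by omega
      set S : Finset ℕ := (Finset.Ioc 0 c).erase u.val ∪ ((Finset.Ioc (q*m) (q*m+r)).erase v.val) with hS
      have hmemS : ∀ a, a ∈ S ↔ ((0 < a ∧ a ≤ c ∧ a ≠ u.val) ∨ (q*m < a ∧ a ≤ q*m + r ∧ a ≠ v.val)) := by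
        intro a
        simp only [hS, Finset.mem_union, Finset.mem_Ioc, Finset.mem_erase]
        tauto
      have hsub : {x : Fin n | x.val ∈ S} ⊆
          ((myG n m q c).neighborSet u ∩ (myG n m q c).neighborSet v) := by
        intro x hx
        rw [Set.mem_setOf_eq, hmemS] at hx
        rcases hx with ⟨h1, h2, h3⟩ | ⟨h1, h2, h3⟩
        · refine ⟨⟨Fin.ne_of_val_ne (fun h => h3 h.symm), ?_⟩,
            ⟨Fin.ne_of_val_ne (by omega), ?_⟩⟩
          · exact Or.inr (Or.inr (Or.inl ⟨0, by omega, by omega, by omega, by omega⟩))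
          · exact Or.inr (Or.inr (Or.inr (Or.inr (Or.inl ⟨hv, h1, h2⟩))))
        · refine ⟨⟨Fin.ne_of_val_ne (by omega), ?_⟩,
            ⟨Fin.ne_of_val_ne (fun h => h3 h.symm), ?_⟩⟩
          · exact Or.inr (Or.inr (Or.inr (Or.inr (Or.inr ⟨h1, hu0, huc⟩))))
          · exact Or.inr (Or.inr (Or.inr (Or.inl ⟨hv, h1⟩)))
      have hSlt : ∀ a ∈ S, a < n := by
        intro a ha
        rw [hmemS] at ha
        omega
      have hcard : S.card = (c - 1) + (r - 1) := by
        rw [hS, Finset.card_union_of_disjoint, Finset.card_erase_of_mem, Finset.card_erase_of_mem]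
        · simp [Nat.card_Ioc]
        · simp only [Finset.mem_Ioc]; omega
        · simp only [Finset.mem_Ioc]; omega
        · rw [Finset.disjoint_left]
          intro a ha hb
          simp only [Finset.mem_erase, Finset.mem_Ioc] at ha hb
          omega
      have hle2 := Set.ncard_le_ncard hsub (Set.toFinite _)
      rw [ncard_val_mem S hSlt, hcard] at hle2
      omega
    · -- both interior (or u = hub)
      rcases Nat.eq_zero_or_pos u.val with hu0 | hu0
      · -- u = hub, v interior
        have hv0 : 0 < v.val := by omega
        obtain ⟨i, hi1, hi2, hi3⟩ := exists_block hm hv0 hv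
        set S : Finset ℕ := (Finset.Ioc (i*m) (i*m+m)).erase v.val with hS
        have hmemS : ∀ a, a ∈ S ↔ (i*m < a ∧ a ≤ i*m+m ∧ a ≠ v.val) := by
          intro a
          simp only [hS, Finset.mem_erase, Finset.mem_Ioc]
          tauto
        have hsub : {x : Fin n | x.val ∈ S} ⊆
            ((myG n m q c).neighborSet u ∩ (myG n m q c).neighborSet v) := by
          intro x hx
          rw [Set.mem_setOf_eq, hmemS] at hx
          obtain ⟨h1, h2, h3⟩ := hx
          refine ⟨⟨Fin.ne_of_val_ne (by omega), ?_⟩,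
            ⟨Fin.ne_of_val_ne (fun h => h3 h.symm), ?_⟩⟩
          · exact Or.inl ⟨hu0, by omega, by omega⟩
          · exact Or.inr (Or.inr (Or.inl ⟨i, hi1, hi2, h1, h2⟩))
        have hSlt : ∀ a ∈ S, a < n := by
          intro a ha
          rw [hmemS] at ha
          omega
        have hcard : S.card = m - 1 := by
          rw [hS, Finset.card_erase_of_mem]
          · simp [Nat.card_Ioc]
          · simp only [Finset.mem_Ioc]; omega
        have hle2 := Set.ncard_le_ncard hsub (Set.toFinite _)
        rw [ncard_val_mem S hSlt, hcard] at hle2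
        omega
      · -- u, v interior, same block
        obtain ⟨i, hi1, hi2, hi3, hi4⟩ : ∃ i, i*m < u.val ∧ u.val ≤ i*m+m ∧ i*m < v.val ∧ v.val ≤ i*m+m := by
          rcases hrel with ⟨h1,h2,h3⟩|⟨h1,h2,h3⟩|⟨i,h1,h2,h3,h4⟩|⟨h1,h2⟩|⟨h1,h2,h3⟩|⟨h1,h2,h3⟩ <;>
            first
            | omega
            | exact ⟨i, h1, h2, h3, h4⟩
        have hi5 : i * m + m ≤ q * m := block_le hi1 hu
        set S : Finset ℕ := insert 0 (((Finset.Ioc (i*m) (i*m+m)).erase u.val).erase v.val) with hS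
        have hmemS : ∀ a, a ∈ S ↔ (a = 0 ∨ (i*m < a ∧ a ≤ i*m+m ∧ a ≠ u.val ∧ a ≠ v.val)) := by
          intro a
          simp only [hS, Finset.mem_insert, Finset.mem_erase, Finset.mem_Ioc]
          tauto
        have hsub : {x : Fin n | x.val ∈ S} ⊆
            ((myG n m q c).neighborSet u ∩ (myG n m q c).neighborSet v) := by
          intro x hx
          rw [Set.mem_setOf_eq, hmemS] at hx
          rcases hx with h0 | ⟨h1, h2, h3, h4⟩
          · refine ⟨⟨Fin.ne_of_val_ne (by omega), ?_⟩, ⟨Fin.ne_of_val_ne (by omega), ?_⟩⟩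
            · exact Or.inr (Or.inl ⟨h0, hu0, hu⟩)
            · exact Or.inr (Or.inl ⟨h0, by omega, hv⟩)
          · refine ⟨⟨Fin.ne_of_val_ne (fun h => h3 h.symm), ?_⟩,
              ⟨Fin.ne_of_val_ne (fun h => h4 h.symm), ?_⟩⟩
            · exact Or.inr (Or.inr (Or.inl ⟨i, hi1, hi2, h1, h2⟩))
            · exact Or.inr (Or.inr (Or.inl ⟨i, hi3, hi4, h1, h2⟩))
        have hSlt : ∀ a ∈ S, a < n := by
          intro a ha
          rw [hmemS] at ha
          omega
        have hcard : S.card = (m - 2) + 1 := by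
          rw [hS]
          rw [Finset.card_insert_of_notMem, Finset.card_erase_of_mem, Finset.card_erase_of_mem]
          · simp only [Nat.card_Ioc]; omega
          · simp only [Finset.mem_Ioc]; omega
          · simp only [Finset.mem_erase, Finset.mem_Ioc]; exact ⟨by omega, by omega, by omega⟩
          · simp only [Finset.mem_erase, Finset.mem_Ioc]; omega
        have hle2 := Set.ncard_le_ncard hsub (Set.toFinite _)
        rw [ncard_val_mem S hSlt, hcard] at hle2
        omega

section nbhd2
variable {n m q c r : ℕ}

lemma nbhd_hub (hn : n = q*m+r+1) (v : Fin n) (hv : v.val = 0) :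
    (myG n m q c).neighborSet v = {x : Fin n | 0 < x.val ∧ x.val ≤ q * m} := by
  ext x
  simp only [SimpleGraph.mem_neighborSet, myG_adj, Set.mem_setOf_eq]
  constructor
  · rintro ⟨hne, h⟩
    rcases h with ⟨h1,h2,h3⟩|⟨h1,h2,h3⟩|⟨i,h1,h2,h3,h4⟩|⟨h1,h2⟩|⟨h1,h2,h3⟩|⟨h1,h2,h3⟩
    · exact ⟨h2, h3⟩
    all_goals omega
  · rintro ⟨h1, h2⟩
    exact ⟨Fin.ne_of_val_ne (by omega), Or.inl ⟨hv, h1, h2⟩⟩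

lemma nbhd_interior (hn : n = q*m+r+1) (hm : 0 < m) {v : Fin n} {i : ℕ}
    (hv0 : 0 < v.val) (hvq : v.val ≤ q * m)
    (hi1 : i * m < v.val) (hi2 : v.val ≤ i * m + m)
    (hnc : c < v.val ∨ r = 0) :
    (myG n m q c).neighborSet v =
      {x : Fin n | x.val = 0 ∨ (i * m < x.val ∧ x.val ≤ i * m + m ∧ x ≠ v)} := by
  ext x
  have hxlt : x.val < n := x.isLt
  simp only [SimpleGraph.mem_neighborSet, myG_adj, Set.mem_setOf_eq]
  constructor
  · rintro ⟨hne, h⟩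
    rcases h with ⟨h1,h2,h3⟩|⟨h1,h2,h3⟩|⟨j,h1,h2,h3,h4⟩|⟨h1,h2⟩|⟨h1,h2,h3⟩|⟨h1,h2,h3⟩
    · omega
    · exact Or.inl h1
    · have := block_uniq h1 h2 hi1 hi2
      subst this
      exact Or.inr ⟨h3, h4, fun hx => hne (hx ▸ rfl)⟩
    · omega
    · omega
    · omega
  · rintro (h1 | ⟨h1, h2, h3⟩)
    · exact ⟨Fin.ne_of_val_ne (by omega), Or.inr (Or.inl ⟨h1, hv0, hvq⟩)⟩
    · exact ⟨fun hx => h3 (hx.symm), Or.inr (Or.inr (Or.inl ⟨i, hi1, hi2, h1, h2⟩))⟩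

lemma nbhd_chosen (hn : n = q*m+r+1) (hm : 0 < m) (hq : 0 < q) {v : Fin n}
    (hv0 : 0 < v.val) (hvc : v.val ≤ c) (hcm : c ≤ m) :
    (myG n m q c).neighborSet v =
      {x : Fin n | x.val = 0 ∨ (0 < x.val ∧ x.val ≤ m ∧ x ≠ v) ∨ q * m < x.val} := by
  have hmq : m ≤ q * m := Nat.le_mul_of_pos_left m hq
  ext x
  simp only [SimpleGraph.mem_neighborSet, myG_adj, Set.mem_setOf_eq]
  constructor
  · rintro ⟨hne, h⟩
    rcases h with ⟨h1,h2,h3⟩|⟨h1,h2,h3⟩|⟨j,h1,h2,h3,h4⟩|⟨h1,h2⟩|⟨h1,h2,h3⟩|⟨h1,h2,h3⟩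
    · omega
    · exact Or.inl h1
    · have hj0 : j = 0 := by
        have h0 : (0:ℕ) * m < v.val := by omega
        have h0' : v.val ≤ 0 * m + m := by omega
        exact block_uniq h1 h2 h0 h0'
      subst hj0
      exact Or.inr (Or.inl ⟨by omega, by omega, fun hx => hne (hx ▸ rfl)⟩)
    · omega
    · omega
    · exact Or.inr (Or.inr h1)
  · rintro (h1 | ⟨h1, h2, h3⟩ | h1)
    · exact ⟨Fin.ne_of_val_ne (by omega), Or.inr (Or.inl ⟨h1, hv0, by omega⟩)⟩
    · refine ⟨fun hx => h3 hx.symm, Or.inr (Or.inr (Or.inl ⟨0, ?_, ?_, ?_, ?_⟩))⟩ <;> omega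
    · exact ⟨Fin.ne_of_val_ne (by omega), Or.inr (Or.inr (Or.inr (Or.inr (Or.inr ⟨h1, hv0, hvc⟩))))⟩

lemma nbhd_extra (hn : n = q*m+r+1) (hm : 0 < m) (hq : 0 < q) (hrm : r < m) {v : Fin n}
    (hv : q * m < v.val) (hcm : c ≤ m) :
    (myG n m q c).neighborSet v =
      {x : Fin n | (0 < x.val ∧ x.val ≤ c) ∨ (q * m < x.val ∧ x ≠ v)} := by
  have hmq : m ≤ q * m := Nat.le_mul_of_pos_left m hq
  have hvlt : v.val < n := v.isLt
  ext x
  simp only [SimpleGraph.mem_neighborSet, myG_adj, Set.mem_setOf_eq]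
  constructor
  · rintro ⟨hne, h⟩
    rcases h with ⟨h1,h2,h3⟩|⟨h1,h2,h3⟩|⟨j,h1,h2,h3,h4⟩|⟨h1,h2⟩|⟨h1,h2,h3⟩|⟨h1,h2,h3⟩
    · omega
    · omega
    · have hjq : j = q := by
        have h0 : q * m < v.val := hv
        have h0' : v.val ≤ q * m + m := by omega
        exact block_uniq h1 h2 h0 h0'
      subst hjq
      exact Or.inr ⟨h3, fun hx => hne (hx ▸ rfl)⟩
    · exact Or.inr ⟨h2, fun hx => hne (hx ▸ rfl)⟩
    · exact Or.inl ⟨h2, h3⟩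
    · omega
  · rintro (⟨h1, h2⟩ | ⟨h1, h2⟩)
    · exact ⟨Fin.ne_of_val_ne (by omega),
        Or.inr (Or.inr (Or.inr (Or.inr (Or.inl ⟨hv, h1, h2⟩))))⟩
    · exact ⟨fun hx => h2 hx.symm, Or.inr (Or.inr (Or.inr (Or.inl ⟨hv, h1⟩)))⟩

end nbhd2


lemma two_choose (a : ℕ) : 2 * Nat.choose a 2 = a * (a - 1) := by
  induction a with
  | zero => simp
  | succ b ih =>
    rw [Nat.choose_succ_succ, Nat.choose_one_right, Nat.mul_add, ih]
    cases b with
    | zero => simp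
    | succ s => simp only [Nat.add_sub_cancel]; ring

lemma final_arith (m q c r n : ℕ) (hm : 0 < m) (hq : 0 < q) (hn : n = q*m+r+1)
    (hc : c + r = m + 1) (hr : r < m) :
    q*m + (if 0 < r then c*(m+r) + (n-1-c)*m else (n-1)*m)
      = 2*(q * Nat.choose (m+1) 2 + Nat.choose r 2 + r*c) := by
  have h2 : 2 * Nat.choose (m+1) 2 = (m+1)*m := by rw [two_choose]; simp
  have hrw : 2*(q * Nat.choose (m+1) 2 + Nat.choose r 2 + r*c)
      = q * (2 * Nat.choose (m+1) 2) + 2 * Nat.choose r 2 + 2*(r*c) := by ring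
  cases r with
  | zero =>
    simp only [lt_self_iff_false, if_false] at *
    have h1 : n - 1 = q * m := by omega
    rw [h1, hrw, h2]
    have h0 : Nat.choose 0 2 = 0 := rfl
    rw [h0]
    ring
  | succ s =>
    have hcm : c ≤ m := by omega
    have hmq : m ≤ q*m := Nat.le_mul_of_pos_left m hq
    obtain ⟨e, he1, he2⟩ : ∃ e, n - 1 - c = e ∧ c + e = q*m + s + 1 :=
      ⟨n - 1 - c, rfl, by omega⟩
    rw [if_pos (by omega), he1, hrw, h2, two_choose]
    simp only [Nat.add_sub_cancel]
    have hm' : m = c + s := by omega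
    subst hm'
    zify at he2 ⊢
    linear_combination ((c:ℤ) + s) * he2

lemma deg_eq_ncard {V : Type*} [Fintype V] (G : SimpleGraph V) [DecidableRel G.Adj] (v : V) :
    G.degree v = (G.neighborSet v).ncard := by
  rw [← SimpleGraph.card_neighborSet_eq_degree, Set.ncard_eq_toFinset_card', Set.toFinset_card]

lemma sum_piece (n m q c r : ℕ) (hn : n = q*m+r+1) (hm : 0 < m) (hq : 0 < q)
    (hcn : 0 < r → c < n) :
    ∑ a ∈ Finset.range n, (if a = 0 then q*m else if 0 < r ∧ a ≤ c then m+r else m)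
      = q*m + (if 0 < r then c*(m+r) + (n-1-c)*m else (n-1)*m) := by
  rcases Nat.eq_zero_or_pos r with hr | hr
  · subst hr
    simp only [lt_self_iff_false, false_and, if_false]
    rw [Finset.range_eq_Ico, ← Finset.sum_Ico_consecutive _ (by omega : 0 ≤ 1) (by omega : 1 ≤ n)]
    rw [Finset.sum_Ico_eq_sum_range]
    simp only [Nat.sub_zero]
    rw [Finset.sum_range_one]
    simp only [if_pos rfl]
    congr 1
    have hval : ∀ a ∈ Finset.Ico 1 n,
        (if a = 0 then q*m else m) = m := by
      intro a ha
      simp only [Finset.mem_Ico] at ha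
      rw [if_neg (by omega)]
    rw [Finset.sum_congr rfl hval, Finset.sum_const, Nat.card_Ico, smul_eq_mul]
  · have hcn' := hcn hr
    simp only [if_pos hr]
    rw [Finset.range_eq_Ico, ← Finset.sum_Ico_consecutive _ (by omega : 0 ≤ 1) (by omega : 1 ≤ n),
      ← Finset.sum_Ico_consecutive _ (by omega : 1 ≤ c+1) (by omega : c+1 ≤ n)]
    have e1 : ∑ a ∈ Finset.Ico 0 1, (if a = 0 then q*m else if 0 < r ∧ a ≤ c then m+r else m) = q*m := by
      simp
    have e2 : ∑ a ∈ Finset.Ico 1 (c+1), (if a = 0 then q*m else if 0 < r ∧ a ≤ c then m+r else m)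
        = c*(m+r) := by
      have hval : ∀ a ∈ Finset.Ico 1 (c+1),
          (if a = 0 then q*m else if 0 < r ∧ a ≤ c then m+r else m) = m + r := by
        intro a ha
        simp only [Finset.mem_Ico] at ha
        rw [if_neg (by omega), if_pos (by omega)]
      rw [Finset.sum_congr rfl hval, Finset.sum_const, Nat.card_Ico, smul_eq_mul]
      congr 1
    have e3 : ∑ a ∈ Finset.Ico (c+1) n, (if a = 0 then q*m else if 0 < r ∧ a ≤ c then m+r else m)
        = (n-1-c)*m := by
      have hval : ∀ a ∈ Finset.Ico (c+1) n,
          (if a = 0 then q*m else if 0 < r ∧ a ≤ c then m+r else m) = m := by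
        intro a ha
        simp only [Finset.mem_Ico] at ha
        rw [if_neg (by omega), if_neg (by omega)]
      rw [Finset.sum_congr rfl hval, Finset.sum_const, Nat.card_Ico, smul_eq_mul]
      congr 1
      omega
    rw [e1, e2, e3]


section ncards
variable {n m q c r : ℕ}

lemma ncard_nbhd_hub (hn : n = q*m+r+1) (v : Fin n) (hv : v.val = 0) :
    ((myG n m q c).neighborSet v).ncard = q * m := by
  rw [nbhd_hub (r := r) hn v hv]
  have hset : {x : Fin n | 0 < x.val ∧ x.val ≤ q*m}
      = {x : Fin n | x.val ∈ Finset.Ioc 0 (q*m)} := by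
    ext x; simp [Finset.mem_Ioc]
  rw [hset, ncard_val_mem _ (by intro a ha; simp only [Finset.mem_Ioc] at ha; omega)]
  simp [Nat.card_Ioc]

lemma ncard_nbhd_pos (hn : n = q*m+r+1) (hm : 0 < m) (hq : 0 < q) (hrm : r < m)
    (hc : c + r = m + 1) (v : Fin n) (hv : 0 < v.val) :
    ((myG n m q c).neighborSet v).ncard = if 0 < r ∧ v.val ≤ c then m + r else m := by
  have hmq : m ≤ q * m := Nat.le_mul_of_pos_left m hq
  have hvlt : v.val < n := v.isLt
  rcases Nat.lt_or_ge (q*m) v.val with hx | hx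
  · -- extra vertex
    have hr1 : 1 ≤ r := by omega
    rw [if_neg (by omega), nbhd_extra hn hm hq hrm hx (by omega)]
    have hset : {x : Fin n | (0 < x.val ∧ x.val ≤ c) ∨ (q * m < x.val ∧ x ≠ v)}
        = {x : Fin n | x.val ∈ Finset.Ioc 0 c ∪ ((Finset.Ioc (q*m) (q*m+r)).erase v.val)} := by
      ext x
      have hxl := x.isLt
      simp only [Set.mem_setOf_eq, Finset.mem_union, Finset.mem_Ioc, Finset.mem_erase, ne_eq,
        Fin.ext_iff]
      omega
    rw [hset, ncard_val_mem _ (by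
      intro a ha
      simp only [Finset.mem_union, Finset.mem_Ioc, Finset.mem_erase] at ha
      omega)]
    have hd : Disjoint (Finset.Ioc 0 c) ((Finset.Ioc (q*m) (q*m+r)).erase v.val) := by
      rw [Finset.disjoint_left]
      intro a ha hb
      simp only [Finset.mem_Ioc] at ha
      simp only [Finset.mem_erase, Finset.mem_Ioc] at hb
      omega
    have hmem : v.val ∈ Finset.Ioc (q*m) (q*m+r) := by
      simp only [Finset.mem_Ioc]; omega
    rw [Finset.card_union_of_disjoint hd, Finset.card_erase_of_mem hmem, Nat.card_Ioc,
      Nat.card_Ioc]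
    omega
  · by_cases hch : 0 < r ∧ v.val ≤ c
    · rw [if_pos hch, nbhd_chosen hn hm hq hv hch.2 (by omega)]
      have hset : {x : Fin n | x.val = 0 ∨ (0 < x.val ∧ x.val ≤ m ∧ x ≠ v) ∨ q * m < x.val}
          = {x : Fin n | x.val ∈
            insert 0 (((Finset.Ioc 0 m).erase v.val) ∪ Finset.Ioc (q*m) (q*m+r))} := by
        ext x
        have hxl := x.isLt
        simp only [Set.mem_setOf_eq, Finset.mem_insert, Finset.mem_union, Finset.mem_Ioc,
          Finset.mem_erase, ne_eq, Fin.ext_iff]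
        omega
      rw [hset, ncard_val_mem _ (by
        intro a ha
        simp only [Finset.mem_insert, Finset.mem_union, Finset.mem_Ioc, Finset.mem_erase] at ha
        omega)]
      have hd : Disjoint ((Finset.Ioc 0 m).erase v.val) (Finset.Ioc (q*m) (q*m+r)) := by
        rw [Finset.disjoint_left]
        intro a ha hb
        simp only [Finset.mem_erase, Finset.mem_Ioc] at ha hb
        omega
      have hmem : v.val ∈ Finset.Ioc 0 m := by simp only [Finset.mem_Ioc]; omega
      rw [Finset.card_insert_of_notMem (by
        simp only [Finset.mem_union, Finset.mem_erase, Finset.mem_Ioc]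
        omega),
        Finset.card_union_of_disjoint hd, Finset.card_erase_of_mem hmem, Nat.card_Ioc,
        Nat.card_Ioc]
      omega
    · rw [if_neg hch]
      have hnc : c < v.val ∨ r = 0 := by omega
      obtain ⟨i, hi1, hi2, hi3⟩ := exists_block hm hv hx
      rw [nbhd_interior hn hm hv hx hi1 hi2 hnc]
      have hset : {x : Fin n | x.val = 0 ∨ (i * m < x.val ∧ x.val ≤ i * m + m ∧ x ≠ v)}
          = {x : Fin n | x.val ∈ insert 0 ((Finset.Ioc (i*m) (i*m+m)).erase v.val)} := by
        ext x
        simp only [Set.mem_setOf_eq, Finset.mem_insert, Finset.mem_erase, Finset.mem_Ioc, ne_eq,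
          Fin.ext_iff]
        omega
      rw [hset, ncard_val_mem _ (by
        intro a ha
        simp only [Finset.mem_insert, Finset.mem_erase, Finset.mem_Ioc] at ha
        omega)]
      have hmem : v.val ∈ Finset.Ioc (i*m) (i*m+m) := by simp only [Finset.mem_Ioc]; omega
      rw [Finset.card_insert_of_notMem (by
        simp only [Finset.mem_erase, Finset.mem_Ioc]
        omega),
        Finset.card_erase_of_mem hmem, Nat.card_Ioc]
      omega

lemma common_hub_one (hn : n = q*m+r+1) (hm : 0 < m) (hq : 0 < q) (hrm : r < m)
    (hc : c + r = m + 1) (hub one : Fin n) (h0 : hub.val = 0) (h1 : one.val = 1) :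
    (((myG n m q c).neighborSet hub) ∩ ((myG n m q c).neighborSet one)).ncard = m - 1 := by
  have hmq : m ≤ q * m := Nat.le_mul_of_pos_left m hq
  rw [nbhd_hub (r := r) hn hub h0]
  have hcard : ((Finset.Ioc 0 m).erase 1).card = m - 1 := by
    rw [Finset.card_erase_of_mem (by simp only [Finset.mem_Ioc]; omega), Nat.card_Ioc]
    omega
  rcases Nat.eq_zero_or_pos r with hr | hr
  · rw [nbhd_interior hn hm (by omega) (by omega) (by omega : 0 * m < one.val)
      (by omega : one.val ≤ 0 * m + m) (Or.inr hr)]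
    have hset : {x : Fin n | 0 < x.val ∧ x.val ≤ q * m} ∩
        {x : Fin n | x.val = 0 ∨ (0 * m < x.val ∧ x.val ≤ 0 * m + m ∧ x ≠ one)}
        = {x : Fin n | x.val ∈ (Finset.Ioc 0 m).erase 1} := by
      ext x
      simp only [Set.mem_inter_iff, Set.mem_setOf_eq, Finset.mem_erase, Finset.mem_Ioc, ne_eq,
        Fin.ext_iff, h1]
      omega
    rw [hset, ncard_val_mem _ (by
      intro a ha
      simp only [Finset.mem_erase, Finset.mem_Ioc] at ha
      omega), hcard]
  · rw [nbhd_chosen hn hm hq (by omega) (by omega : one.val ≤ c) (by omega)]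
    have hset : {x : Fin n | 0 < x.val ∧ x.val ≤ q * m} ∩
        {x : Fin n | x.val = 0 ∨ (0 < x.val ∧ x.val ≤ m ∧ x ≠ one) ∨ q * m < x.val}
        = {x : Fin n | x.val ∈ (Finset.Ioc 0 m).erase 1} := by
      ext x
      simp only [Set.mem_inter_iff, Set.mem_setOf_eq, Finset.mem_erase, Finset.mem_Ioc, ne_eq,
        Fin.ext_iff, h1]
      omega
    rw [hset, ncard_val_mem _ (by
      intro a ha
      simp only [Finset.mem_erase, Finset.mem_Ioc] at ha
      omega), hcard]

end ncards

/-- A graph `G` is `k`-dense if every two adjacent vertices have at least `k - 2`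
common neighbors. -/
def kDense {V : Type*} (G : SimpleGraph V) (k : ℕ) : Prop :=
  ∀ u v : V, G.Adj u v → k - 2 ≤ (G.neighborSet u ∩ G.neighborSet v).ncard

/-- A graph is `k*`-dense if it is `k`-dense but not `(k+1)`-dense. -/
def kStarDense {V : Type*} (G : SimpleGraph V) (k : ℕ) : Prop :=
  kDense G k ∧ ¬ kDense G (k + 1)

/-- For 2 ≤ k ≤ n with n − 1 = (k−1)q + r, 0 ≤ r < k−1, there is a connected
k*-dense graph on n vertices with q·C(k,2) + C(r,2) + r(k−r) edges. -/
theorem exists_connected_kStarDense_with_edges (k n q r : ℕ) (hk : 2 ≤ k) (hkn : k ≤ n)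
    (hqr : n - 1 = (k - 1) * q + r) (hr : r < k - 1) :
    ∃ G : SimpleGraph (Fin n), G.Connected ∧ kStarDense G k ∧
      G.edgeSet.ncard = q * Nat.choose k 2 + Nat.choose r 2 + r * (k - r) := by
  classical
  obtain ⟨m, rfl⟩ : ∃ m, k = m + 1 := ⟨k - 1, by omega⟩
  simp only [Nat.add_sub_cancel] at hqr hr
  have hm : 0 < m := by omega
  have hq : 0 < q := by
    rcases Nat.eq_zero_or_pos q with h | h
    · subst h; simp at hqr; omega
    · exact h
  have hmqc : m * q = q * m := Nat.mul_comm m q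
  have hn : n = q * m + r + 1 := by omega
  set c : ℕ := m + 1 - r with hcdef
  have hc : c + r = m + 1 := by omega
  have hmq : m ≤ q * m := Nat.le_mul_of_pos_left m hq
  have h0n : 0 < n := by omega
  have h1n : 1 < n := by omega
  set hub : Fin n := ⟨0, h0n⟩ with hhub
  set one : Fin n := ⟨1, h1n⟩ with hone
  have hubval : hub.val = 0 := rfl
  have oneval : one.val = 1 := rfl
  refine ⟨myG n m q c, ?_, ⟨?_, ?_⟩, ?_⟩
  · -- Connected
    have hreach : ∀ v : Fin n, (myG n m q c).Reachable v hub := by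
      intro v
      have hvlt : v.val < n := v.isLt
      rcases Nat.eq_zero_or_pos v.val with h | h
      · have hv : v = hub := Fin.ext (by omega)
        rw [hv]
      · rcases Nat.lt_or_ge (q*m) v.val with hx | hx
        · have h1 : (myG n m q c).Adj v one :=
            ⟨Fin.ne_of_val_ne (by omega),
              Or.inr (Or.inr (Or.inr (Or.inr (Or.inl ⟨hx, by omega, by omega⟩))))⟩
          have h2 : (myG n m q c).Adj one hub :=
            ⟨Fin.ne_of_val_ne (by omega), Or.inr (Or.inl ⟨hubval, by omega, by omega⟩)⟩
          exact h1.reachable.trans h2.reachable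
        · exact (SimpleGraph.Adj.reachable
            ⟨Fin.ne_of_val_ne (by omega), Or.inr (Or.inl ⟨hubval, h, hx⟩)⟩)
    exact (SimpleGraph.connected_iff _).mpr
      ⟨fun a b => (hreach a).trans (hreach b).symm, ⟨hub⟩⟩
  · -- kDense
    intro u v huv
    have hb := dense_lower hn hm hq hr hc huv
    omega
  · -- not (k+1)-dense
    intro hD
    have hadj : (myG n m q c).Adj hub one :=
      ⟨Fin.ne_of_val_ne (by omega), Or.inl ⟨hubval, by omega, by omega⟩⟩
    have hcount := hD hub one hadj
    rw [common_hub_one hn hm hq hr hc hub one hubval oneval] at hcount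
    omega
  · -- edge count
    have hdeg : ∀ v : Fin n, (myG n m q c).degree v =
        (if v.val = 0 then q*m else if 0 < r ∧ v.val ≤ c then m+r else m) := by
      intro v
      rw [deg_eq_ncard]
      rcases Nat.eq_zero_or_pos v.val with h | h
      · rw [if_pos h, ncard_nbhd_hub (r := r) hn v h]
      · rw [if_neg (by omega), ncard_nbhd_pos hn hm hq hr hc v h]
    have hsum : ∑ v : Fin n, (myG n m q c).degree v
        = q*m + (if 0 < r then c*(m+r) + (n-1-c)*m else (n-1)*m) := by
      rw [Finset.sum_congr rfl (fun v _ => hdeg v),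
        Fin.sum_univ_eq_sum_range (fun a => if a = 0 then q*m else if 0 < r ∧ a ≤ c then m+r else m) n]
      exact sum_piece n m q c r hn hm hq (fun hr0 => by omega)
    have hhs := SimpleGraph.sum_degrees_eq_twice_card_edges (myG n m q c)
    have hedge : (myG n m q c).edgeSet.ncard = (myG n m q c).edgeFinset.card := by
      rw [SimpleGraph.edgeFinset]
      exact Set.ncard_eq_toFinset_card' _
    have harith := final_arith m q c r n hm hq hn hc hr
    rw [hedge]
    omega
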